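/- Under the hypotheses of Theorem 1.3, if σ is any state on (G, G⁺) with respect to the order unit u = u¹ + u², then σ(u¹) ≥ 0 and σ(u²) ≥ 0, and there exist states σ₁, σ₂ with σ₁(u¹) = σ₂(u²) = 1 and σ₁(u²) = σ₂(u¹) = 0. -/

import Mathlib

open scoped BigOperators

/-- The action of the block matrix `[[Aₙ^{1,1}, Aₙ^{1,2}],[Aₙ^{2,1}, Aₙ^{2,2}]]`
on `ℤ^{Jₙ} ⊕ ℤ^{Jₙ}`. -/
def blockStep (J : ℕ → ℕ) (A : ∀ n, Fin 2 → Fin 2 → Fin (J (n+1)) → Fin (J n) → ℤ)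
    (n : ℕ) (x : (Fin (J n) → ℤ) × (Fin (J n) → ℤ)) :
    (Fin (J (n+1)) → ℤ) × (Fin (J (n+1)) → ℤ) :=
  (fun j' => ∑ j, (A n 0 0 j' j * x.1 j + A n 0 1 j' j * x.2 j),
   fun j' => ∑ j, (A n 1 0 j' j * x.1 j + A n 1 1 j' j * x.2 j))

/-- The composite of `k` successive block matrices, from level `n` to level `n + k`. -/
def blockPush (J : ℕ → ℕ) (A : ∀ n, Fin 2 → Fin 2 → Fin (J (n+1)) → Fin (J n) → ℤ) :
    (k n : ℕ) → ((Fin (J n) → ℤ) × (Fin (J n) → ℤ)) →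
      (Fin (J (n+k)) → ℤ) × (Fin (J (n+k)) → ℤ)
  | 0, _, x => x
  | k+1, n, x => blockStep J A (n+k) (blockPush J A k n x)

/-- `u` is an order unit for the cone `P`. -/
def IsOrderUnit {G : Type*} [AddCommGroup G] (P : Set G) (u : G) : Prop :=
  u ∈ P ∧ ∀ a : G, ∃ k : ℕ, 0 < k ∧ k • u - a ∈ P

/-- A state on `(G, P)` with respect to the order unit `u`. -/
def IsState {G : Type*} [AddCommGroup G] (P : Set G) (u : G) (τ : G →+ ℝ) : Prop :=
  (∀ a ∈ P, 0 ≤ τ a) ∧ τ u = 1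

/-- An extremal state: a state which is not a nontrivial convex combination of states. -/
def IsExtremalState {G : Type*} [AddCommGroup G] (P : Set G) (u : G) (τ : G →+ ℝ) : Prop :=
  IsState P u τ ∧ ∀ τ₁ τ₂ : G →+ ℝ, IsState P u τ₁ → IsState P u τ₂ →
    ∀ t : ℝ, 0 < t → t < 1 → (∀ g : G, τ g = t * τ₁ g + (1 - t) * τ₂ g) → τ₁ = τ₂

section Aux

variable (J : ℕ → ℕ) (A : ∀ n, Fin 2 → Fin 2 → Fin (J (n+1)) → Fin (J n) → ℤ)

/-- Transport a pair along an equality of levels. -/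
def castPair {a b : ℕ} (h : a = b) (x : (Fin (J a) → ℤ) × (Fin (J a) → ℤ)) :
    (Fin (J b) → ℤ) × (Fin (J b) → ℤ) := h ▸ x

lemma blockStep_castPair {a b : ℕ} (h : a = b) (hb : a + 1 = b + 1) y :
    blockStep J A b (castPair J h y) = castPair J hb (blockStep J A a y) := by
  subst h; rfl

lemma castPair_fst_add {a b : ℕ} (h : a = b) (x y) :
    castPair J h (x + y) = castPair J h x + castPair J h y := by subst h; rfl

lemma blockPush_succ' (d n : ℕ) (x) :
    blockPush J A (d+1) n x
      = castPair J (by omega : (n+1)+d = n+(d+1))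
          (blockPush J A d (n+1) (blockStep J A n x)) := by
  induction d with
  | zero => rfl
  | succ d ih =>
      show blockStep J A (n+(d+1)) (blockPush J A (d+1) n x) = _
      rw [ih, blockStep_castPair J A _ (by omega)]
      rfl

lemma blockStep_add (n : ℕ) (x y) :
    blockStep J A n (x + y) = blockStep J A n x + blockStep J A n y := by
  refine Prod.ext ?_ ?_ <;> funext j' <;>
    · simp only [blockStep, Prod.fst_add, Prod.snd_add, Pi.add_apply, mul_add]
      rw [← Finset.sum_add_distrib]
      exact Finset.sum_congr rfl fun j _ => by ring

lemma blockPush_add (k n : ℕ) (x y) :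
    blockPush J A k n (x + y) = blockPush J A k n x + blockPush J A k n y := by
  induction k with
  | zero => rfl
  | succ k ih => show blockStep _ _ _ _ = _; rw [ih, blockStep_add]; rfl

/-- `blockPush` as an additive monoid hom. -/
def blockPushHom (k n : ℕ) :
    ((Fin (J n) → ℤ) × (Fin (J n) → ℤ)) →+ ((Fin (J (n+k)) → ℤ) × (Fin (J (n+k)) → ℤ)) :=
  AddMonoidHom.mk' (blockPush J A k n) (blockPush_add J A k n)

lemma blockPush_sub (k n : ℕ) (x y) :
    blockPush J A k n (x - y) = blockPush J A k n x - blockPush J A k n y :=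
  map_sub (blockPushHom J A k n) x y

lemma blockPush_nsmul (k n : ℕ) (N : ℕ) (x) :
    blockPush J A k n (N • x) = N • blockPush J A k n x :=
  map_nsmul (blockPushHom J A k n) N x

lemma blockStep_nonneg (hA : ∀ n (p q : Fin 2) j' j, 0 < A n p q j' j) (n : ℕ) (x)
    (hx : ∀ j, 0 ≤ x.1 j ∧ 0 ≤ x.2 j) :
    ∀ j', 0 ≤ (blockStep J A n x).1 j' ∧ 0 ≤ (blockStep J A n x).2 j' := by
  intro j'
  simp only [blockStep]
  refine ⟨Finset.sum_nonneg fun j _ => add_nonneg ?_ ?_,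
          Finset.sum_nonneg fun j _ => add_nonneg ?_ ?_⟩ <;>
    first
      | exact mul_nonneg (hA _ _ _ _ _).le (hx j).1
      | exact mul_nonneg (hA _ _ _ _ _).le (hx j).2
lemma blockPush_nonneg (hA : ∀ n (p q : Fin 2) j' j, 0 < A n p q j' j) (k n : ℕ) (x)
    (hx : ∀ j, 0 ≤ x.1 j ∧ 0 ≤ x.2 j) :
    ∀ j, 0 ≤ (blockPush J A k n x).1 j ∧ 0 ≤ (blockPush J A k n x).2 j := by
  induction k with
  | zero => exact hx
  | succ k ih => exact blockStep_nonneg J A hA _ _ ih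

variable (hJ : ∀ n, 0 < J n)

lemma castPair_fst_entry {a b : ℕ} (h : a = b) (x) :
    (castPair J h x).1 ⟨0, hJ b⟩ = x.1 ⟨0, hJ a⟩ := by subst h; rfl

/-- First entry of `blockPush J A k n x`, as a plain integer. -/
def eE (n k : ℕ) (x : (Fin (J n) → ℤ) × (Fin (J n) → ℤ)) : ℤ :=
  (blockPush J A k n x).1 ⟨0, hJ _⟩

lemma eE_succ (n k : ℕ) (x) :
    eE J A hJ n (k+1) x = eE J A hJ (n+1) k (blockStep J A n x) := by
  unfold eE
  rw [blockPush_succ']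
  exact castPair_fst_entry J hJ _ _

/-- The first entry of the push of `x` from level `n` to level `m` (for `m ≥ n`). -/
def eEnt (n : ℕ) (x : (Fin (J n) → ℤ) × (Fin (J n) → ℤ)) (m : ℕ) : ℤ :=
  eE J A hJ n (m - n) x

lemma eEnt_add (n : ℕ) (x y) (m : ℕ) :
    eEnt J A hJ n (x + y) m = eEnt J A hJ n x m + eEnt J A hJ n y m := by
  simp only [eEnt, eE, blockPush_add]; rfl

lemma eEnt_sub (n : ℕ) (x y) (m : ℕ) :
    eEnt J A hJ n (x - y) m = eEnt J A hJ n x m - eEnt J A hJ n y m := by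
  simp only [eEnt, eE, blockPush_sub]; rfl

lemma eEnt_nsmul (n : ℕ) (N : ℕ) (x) (m : ℕ) :
    eEnt J A hJ n (N • x) m = N * eEnt J A hJ n x m := by
  simp only [eEnt, eE, blockPush_nsmul]
  simp [Prod.smul_fst, Pi.smul_apply, nsmul_eq_mul]

lemma eEnt_nonneg (hA : ∀ n (p q : Fin 2) j' j, 0 < A n p q j' j) (n : ℕ) (x)
    (hx : ∀ j, 0 ≤ x.1 j ∧ 0 ≤ x.2 j) (m : ℕ) :
    0 ≤ eEnt J A hJ n x m :=
  (blockPush_nonneg J A hA _ _ _ hx _).1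

lemma eEnt_self (n : ℕ) (x) : eEnt J A hJ n x n = x.1 ⟨0, hJ n⟩ := by
  simp only [eEnt, Nat.sub_self]; rfl

lemma eEnt_cast {a b : ℕ} (h : a = b) (w) (m : ℕ) :
    eEnt J A hJ a w m = eEnt J A hJ b (castPair J h w) m := by subst h; rfl

lemma eEnt_step (n : ℕ) (x) (m : ℕ) (hm : n + 1 ≤ m) :
    eEnt J A hJ n x m = eEnt J A hJ (n+1) (blockStep J A n x) m := by
  obtain ⟨d, hd⟩ : ∃ d, m - n = d + 1 := ⟨m - (n+1), by omega⟩
  have hd' : m - (n + 1) = d := by omega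
  simp only [eEnt]
  rw [hd, hd']
  exact eE_succ J A hJ n d x

lemma eEnt_push (n k : ℕ) (x) (m : ℕ) (hm : n + k ≤ m) :
    eEnt J A hJ n x m = eEnt J A hJ (n+k) (blockPush J A k n x) m := by
  induction k with
  | zero => rfl
  | succ k ih =>
      rw [ih (by omega)]
      exact eEnt_step J A hJ (n+k) _ m hm

variable {G : Type*} [AddCommGroup G]
  (η : ∀ n, ((Fin (J n) → ℤ) × (Fin (J n) → ℤ)) →+ G)

lemma eta_push (hηc : ∀ n x, η n x = η (n+1) (blockStep J A n x)) (n k : ℕ) (x) : η n x = η (n+k) (blockPush J A k n x) := by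
  induction k with
  | zero => rfl
  | succ k ih => rw [ih, hηc (n+k)]; rfl

lemma eta_castPair {a b : ℕ} (h : a = b) (w) : η b (castPair J h w) = η a w := by
  subst h; rfl

lemma blockStep_zero (n : ℕ) : blockStep J A n (0 : (Fin (J n) → ℤ) × (Fin (J n) → ℤ)) = 0 := by
  refine Prod.ext ?_ ?_ <;> funext j' <;> simp [blockStep]

lemma blockPush_zero_stable (k d n : ℕ) (x) (h : blockPush J A k n x = 0) :
    blockPush J A (k + d) n x = 0 := by
  induction d with
  | zero => exact h
  | succ d ih =>
      show blockStep J A (n+(k+d)) (blockPush J A (k+d) n x) = 0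
      rw [ih, blockStep_zero]

/-- The engine: a kernel element eventually pushes to `0`. -/
lemma eEnt_engine (hker : ∀ n x, η n x = 0 → ∃ k, blockPush J A k n x = 0)
    (n : ℕ) (x) (hx : η n x = 0) :
    ∀ᶠ m in Filter.atTop, eEnt J A hJ n x m = 0 := by
  obtain ⟨k, hk⟩ := hker n x hx
  rw [Filter.eventually_atTop]
  refine ⟨n + k, fun m hm => ?_⟩
  obtain ⟨d, hd⟩ : ∃ d, m - n = k + d := ⟨m - n - k, by omega⟩
  simp only [eEnt]
  rw [hd]
  simp [eE, blockPush_zero_stable J A k d n x hk]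

/-- Comparison: equal images under `η` give eventually equal entries. -/
lemma eEnt_congr (hηc : ∀ n x, η n x = η (n+1) (blockStep J A n x))
    (hker : ∀ n x, η n x = 0 → ∃ k, blockPush J A k n x = 0)
    {a b : ℕ} {x y} (h : η a x = η b y) :
    ∀ᶠ m in Filter.atTop, eEnt J A hJ a x m = eEnt J A hJ b y m := by
  set N := max a b with hN
  have ha : a + (N - a) = N := by omega
  have hb : b + (N - b) = N := by omega
  set X := castPair J ha (blockPush J A (N - a) a x) with hX
  set Y := castPair J hb (blockPush J A (N - b) b y) with hY
  have hXx : η N X = η a x := by rw [hX, eta_castPair, ← eta_push J A η hηc]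
  have hYy : η N Y = η b y := by rw [hY, eta_castPair, ← eta_push J A η hηc]
  have h0 : η N (X - Y) = 0 := by rw [map_sub, hXx, hYy, h, sub_self]
  have h1 := eEnt_engine J A hJ η hker N (X - Y) h0
  have h2 : ∀ᶠ m in Filter.atTop, N ≤ m := Filter.eventually_atTop.2 ⟨N, fun _ h => h⟩
  filter_upwards [h1, h2] with m hm1 hm2
  have ex : eEnt J A hJ a x m = eEnt J A hJ N X m := by
    rw [eEnt_push J A hJ a (N - a) x m (by omega), eEnt_cast J A hJ ha]
  have ey : eEnt J A hJ b y m = eEnt J A hJ N Y m := by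
    rw [eEnt_push J A hJ b (N - b) y m (by omega), eEnt_cast J A hJ hb]
  rw [eEnt_sub] at hm1
  rw [ex, ey]; omega

end Aux
section RatAux

lemma rat_inv_half {rq : ℚ} (hr1 : 1 < rq) (hr2 : rq < 2) : 1/2 < rq⁻¹ := by
  have h0 : 0 < rq := by linarith
  have := mul_inv_cancel₀ (ne_of_gt h0)
  nlinarith [this]

lemma rat_nonneg1 {k rq lq a b : ℚ} (hk : 4 ≤ k) (hr1 : 1 < rq) (hr2 : rq < 2)
    (hl : 4 ≤ lq) (ha : rq⁻¹ * k ≤ a) (hb : -(rq * k) ≤ lq * b) :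
    0 ≤ lq * a + 4 * b := by
  have h0 : 0 < rq := by linarith
  have hi := rat_inv_half hr1 hr2
  have hlq : (0:ℚ) < lq := by linarith
  have hk0 : (0:ℚ) < k := by linarith
  have ha' : k/2 < a := by nlinarith [mul_pos (show (0:ℚ) < rq⁻¹ - 1/2 by linarith) hk0]
  have ha0 : (0:ℚ) < a := by linarith
  have h16 : 16 * a ≤ lq * lq * a := by nlinarith [mul_le_mul hl hl (by norm_num) (by linarith : (0:ℚ) ≤ lq)]
  have key : 0 ≤ lq * (lq * a + 4 * b) := by
    nlinarith [h16, hb, ha', mul_lt_mul_of_pos_right hr2 hk0]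
  nlinarith [key, hlq]

lemma rat_nonneg2 {k rq lq a b : ℚ} (hk : 4 ≤ k) (hr1 : 1 < rq) (hr2 : rq < 2)
    (hl : 4 ≤ lq) (ha : rq⁻¹ * k ≤ a) (hb : -(rq * k) ≤ lq * b) :
    0 ≤ lq * b + 4 * a := by
  have h0 : 0 < rq := by linarith
  have hi := rat_inv_half hr1 hr2
  have hk0 : (0:ℚ) < k := by linarith
  have ha' : k/2 < a := by nlinarith [mul_pos (show (0:ℚ) < rq⁻¹ - 1/2 by linarith) hk0]
  nlinarith [hb, ha', mul_lt_mul_of_pos_right hr2 hk0]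

lemma rat_unit_pos {k rq lq a c : ℚ} (hk : 4 ≤ k) (hr1 : 1 < rq) (hr2 : rq < 2)
    (hl : 4 ≤ lq) (ha : rq⁻¹ * k ≤ a) (hc : -(rq * k) ≤ lq * c) :
    0 < a + c := by
  have h0 : 0 < rq := by linarith
  have hi := rat_inv_half hr1 hr2
  have hlq : (0:ℚ) < lq := by linarith
  have hk0 : (0:ℚ) < k := by linarith
  have ha' : k/2 < a := by nlinarith [mul_pos (show (0:ℚ) < rq⁻¹ - 1/2 by linarith) hk0]
  have ha0 : (0:ℚ) < a := by linarith
  have key : 0 < lq * (a + c) := by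
    nlinarith [hc, ha', mul_lt_mul_of_pos_right hr2 hk0,
      mul_le_mul_of_nonneg_right hl ha0.le]
  nlinarith [key, hlq]

lemma rat_unit_le {k rq lq a c : ℚ} (hk : 4 ≤ k) (hr1 : 1 < rq) (hr2 : rq < 2)
    (hl : 4 ≤ lq) (ha : a ≤ rq * k) (hc : lq * c ≤ -(rq⁻¹ * k)) :
    a + c ≤ 2 * k := by
  have h0 : 0 < rq := by linarith
  have hlq : (0:ℚ) < lq := by linarith
  have hk0 : (0:ℚ) < k := by linarith
  have hip : 0 < rq⁻¹ * k := mul_pos (inv_pos.mpr h0) hk0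
  have hc0 : c ≤ 0 := by
    by_contra h
    push_neg at h
    nlinarith [mul_pos hlq h]
  nlinarith [mul_lt_mul_of_pos_right hr2 hk0]

end RatAux

lemma strictMono_ge (l : ℕ → ℕ) (hl : StrictMono l) (h4 : 4 ≤ l 0) (m : ℕ) :
    m + 4 ≤ l m := by
  induction m with
  | zero => simpa using h4
  | succ m ih => have := hl (show m < m + 1 by omega); omega
open Filter in
lemma aux_main
    (J : ℕ → ℕ) (hJ : ∀ n, 0 < J n)
    (u : ∀ n, Fin 2 → Fin 2 → Fin (J n) → ℤ)
    (A : ∀ n, Fin 2 → Fin 2 → Fin (J (n+1)) → Fin (J n) → ℤ)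
    (hA : ∀ n (p q : Fin 2) j' j, 0 < A n p q j' j)
    (hcompat : ∀ n (i p : Fin 2) (j' : Fin (J (n+1))),
      u (n+1) i p j' = ∑ j, (A n p 0 j' j * u n i 0 j + A n p 1 j' j * u n i 1 j))
    (r : ℕ → ℚ) (hr1 : ∀ n, 1 < r n) (hr2 : ∀ n, r n < 2)
    (hrlim : Filter.Tendsto r Filter.atTop (nhds 1))
    (K l : ℕ → ℕ) (hl : StrictMono l)
    (hK4 : ∀ n, 4 ≤ K n) (hl4 : ∀ n, 4 ≤ l n)
    (hcond4 : ∀ n (j : Fin (J n)),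
      ((r n)⁻¹ * K n ≤ (u n 0 0 j : ℚ) ∧ (u n 0 0 j : ℚ) ≤ r n * K n) ∧
      ((r n)⁻¹ * K n ≤ (u n 1 1 j : ℚ) ∧ (u n 1 1 j : ℚ) ≤ r n * K n) ∧
      (-(r n * K n) ≤ (l n : ℚ) * u n 0 1 j ∧ (l n : ℚ) * u n 0 1 j ≤ -((r n)⁻¹ * K n)) ∧
      (-(r n * K n) ≤ (l n : ℚ) * u n 1 0 j ∧ (l n : ℚ) * u n 1 0 j ≤ -((r n)⁻¹ * K n)))
    {G : Type*} [AddCommGroup G]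
    (η : ∀ n, ((Fin (J n) → ℤ) × (Fin (J n) → ℤ)) →+ G)
    (hηcompat : ∀ n x, η n x = η (n+1) (blockStep J A n x))
    (hsurj : ∀ g : G, ∃ n x, η n x = g)
    (hker : ∀ n x, η n x = 0 → ∃ k, blockPush J A k n x = 0)
    (P : Set G)
    (hP : P = {g : G | ∃ n x, (∀ j, 0 ≤ x.1 j ∧ 0 ≤ x.2 j) ∧ η n x = g})
    (U1 U2 : G)
    (hU1 : ∀ n, η n (u n 0 0, u n 0 1) = U1)
    (hU2 : ∀ n, η n (u n 1 0, u n 1 1) = U2) :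
    (∀ σ : G →+ ℝ, IsState P (U1 + U2) σ → 0 ≤ σ U1) ∧
    ∃ σ₁ : G →+ ℝ, IsState P (U1 + U2) σ₁ ∧ σ₁ U1 = 1 ∧ σ₁ U2 = 0 := by
  have hK0 : ∀ m, (0:ℝ) < K m := fun m => by
    have := hK4 m; exact_mod_cast (by omega : 0 < K m)
  have hKQ : ∀ m, (4:ℚ) ≤ K m := fun m => by exact_mod_cast hK4 m
  have hlQ : ∀ m, (4:ℚ) ≤ l m := fun m => by exact_mod_cast hl4 m
  -- the u-pairs push forward to u-pairs
  have push_u : ∀ (i : Fin 2) n k,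
      blockPush J A k n (u n i 0, u n i 1) = (u (n+k) i 0, u (n+k) i 1) := by
    intro i n k
    induction k with
    | zero => rfl
    | succ k ih =>
        show blockStep J A (n+k) (blockPush J A k n (u n i 0, u n i 1)) = _
        rw [ih]
        refine Prod.ext (funext fun j' => ?_) (funext fun j' => ?_)
        · exact (hcompat (n+k) i 0 j').symm
        · exact (hcompat (n+k) i 1 j').symm
  have hu_entry : ∀ (i : Fin 2) n m, n ≤ m →
      eEnt J A hJ n (u n i 0, u n i 1) m = u m i 0 ⟨0, hJ m⟩ := by
    intro i n m hm
    rw [eEnt_push J A hJ n (m - n) _ m (by omega), push_u]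
    have hnm : n + (m - n) = m := by omega
    rw [hnm, eEnt_self]
  -- part 1 : every state is nonnegative on U1
  constructor
  · intro σ hσ
    obtain ⟨hpos, hnorm⟩ := hσ
    have hsum : σ U1 + σ U2 = 1 := by rw [← map_add]; exact hnorm
    have hstep : ∀ n, 0 ≤ (l n : ℝ) * σ U1 + 4 * σ U2 := by
      intro n
      have hg : ((l n) • U1 + (4:ℕ) • U2) ∈ P := by
        rw [hP]
        refine ⟨n, (l n) • (u n 0 0, u n 0 1) + (4:ℕ) • (u n 1 0, u n 1 1), fun j => ⟨?_, ?_⟩, ?_⟩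
        · show (0:ℤ) ≤ (l n) • u n 0 0 j + (4:ℕ) • u n 1 0 j
          have e : ((l n) • u n 0 0 j + (4:ℕ) • u n 1 0 j)
              = (l n : ℤ) * u n 0 0 j + 4 * u n 1 0 j := by simp [nsmul_eq_mul]
          rw [e]
          have hq := rat_nonneg1 (hKQ n) (hr1 n) (hr2 n) (hlQ n)
            ((hcond4 n j).1.1) ((hcond4 n j).2.2.2.1)
          exact_mod_cast hq
        · show (0:ℤ) ≤ (l n) • u n 0 1 j + (4:ℕ) • u n 1 1 j
          have e : ((l n) • u n 0 1 j + (4:ℕ) • u n 1 1 j)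
              = (l n : ℤ) * u n 0 1 j + 4 * u n 1 1 j := by simp [nsmul_eq_mul]
          rw [e]
          have hq := rat_nonneg2 (hKQ n) (hr1 n) (hr2 n) (hlQ n)
            ((hcond4 n j).2.1.1) ((hcond4 n j).2.2.1.1)
          exact_mod_cast hq
        · rw [map_add, map_nsmul, map_nsmul, hU1, hU2]
      have h0 := hpos _ hg
      rw [map_add, map_nsmul, map_nsmul, nsmul_eq_mul, nsmul_eq_mul] at h0
      push_cast at h0 ⊢
      linarith
    by_contra hneg
    push_neg at hneg
    have hlt : Tendsto (fun n => (l n : ℝ) * σ U1 + 4 * σ U2) atTop atBot := by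
      have h1 : Tendsto (fun n => (l n : ℝ)) atTop atTop :=
        tendsto_natCast_atTop_atTop.comp hl.tendsto_atTop
      exact tendsto_atBot_add_const_right _ _ (h1.atTop_mul_const_of_neg hneg)
    obtain ⟨n, hn⟩ := (hlt.eventually (eventually_lt_atBot 0)).exists
    exact absurd (hstep n) (not_le.mpr hn)
  -- part 2 : construction of the state σ₁
  · obtain ⟨𝒰, h𝒰⟩ := Ultrafilter.exists_le (atTop : Filter ℕ)
    choose nn xx hxx using hsurj
    set S : G → ℕ → ℝ := fun g m => (eEnt J A hJ (nn g) (xx g) m : ℝ) / K m with hS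
    -- comparison with arbitrary representatives
    have hcong : ∀ (g : G) n x, η n x = g →
        ∀ᶠ m in atTop, S g m = (eEnt J A hJ n x m : ℝ) / K m := by
      intro g n x h
      have h' : η (nn g) (xx g) = η n x := by rw [hxx g, h]
      filter_upwards [eEnt_congr J A hJ η hηcompat hker h'] with m hm
      simp only [hS]; rw [hm]
    -- the u-pair sequences converge
    have hrR : Tendsto (fun m => ((r m : ℚ) : ℝ)) atTop (nhds 1) := by
      have : Continuous (fun q : ℚ => (q : ℝ)) := Rat.continuous_coe_real
      simpa [Function.comp_def] using (this.continuousAt.tendsto.comp hrlim)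
    have hrRinv : Tendsto (fun m => ((r m : ℚ) : ℝ)⁻¹) atTop (nhds 1) := by
      simpa using hrR.inv₀ one_ne_zero
    have hrpos : ∀ m, (0:ℝ) < ((r m : ℚ) : ℝ) := fun m => by
      have := hr1 m; exact_mod_cast (by linarith : (0:ℚ) < r m)
    have hlR : ∀ m, (0:ℝ) < l m := fun m => by
      have := hl4 m; exact_mod_cast (by omega : 0 < l m)
    -- bounds from condition 4, in ℝ
    have hb1 : ∀ m (j : Fin (J m)),
        ((r m : ℚ):ℝ)⁻¹ * K m ≤ (u m 0 0 j : ℝ) ∧ (u m 0 0 j : ℝ) ≤ ((r m : ℚ):ℝ) * K m := by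
      intro m j
      have h := (hcond4 m j).1
      constructor <;> [have h' := h.1; have h' := h.2] <;> exact_mod_cast h'
    have hb2 : ∀ m (j : Fin (J m)),
        -(((r m : ℚ):ℝ) * K m) ≤ (l m : ℝ) * (u m 1 0 j : ℝ) ∧
          (l m : ℝ) * (u m 1 0 j : ℝ) ≤ -(((r m : ℚ):ℝ)⁻¹ * K m) := by
      intro m j
      have h := (hcond4 m j).2.2.2
      constructor <;> [have h' := h.1; have h' := h.2] <;> exact_mod_cast h'
    -- limit of the U1-sequence is 1
    have hlim1 : Tendsto (fun m => (u m 0 0 ⟨0, hJ m⟩ : ℝ) / K m) atTop (nhds 1) := by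
      refine tendsto_of_tendsto_of_tendsto_of_le_of_le hrRinv hrR (fun m => ?_) (fun m => ?_)
      · rw [le_div_iff₀ (hK0 m)]; exact (hb1 m _).1
      · rw [div_le_iff₀ (hK0 m)]; exact (hb1 m _).2
    -- limit of the U2-sequence is 0
    have hlim2 : Tendsto (fun m => (u m 1 0 ⟨0, hJ m⟩ : ℝ) / K m) atTop (nhds 0) := by
      have haux : Tendsto (fun m : ℕ => -(2 / ((m:ℝ) + 4))) atTop (nhds 0) := by
        have h1 : Tendsto (fun m : ℕ => ((m:ℝ) + 4)) atTop atTop :=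
          tendsto_atTop_add_const_right _ 4 tendsto_natCast_atTop_atTop
        have h2 : Tendsto (fun m : ℕ => (2:ℝ) / ((m:ℝ) + 4)) atTop (nhds 0) :=
          Tendsto.div_atTop tendsto_const_nhds h1
        simpa using h2.neg
      refine tendsto_of_tendsto_of_tendsto_of_le_of_le haux tendsto_const_nhds
        (fun m => ?_) (fun m => ?_)
      · -- -(2/(m+4)) ≤ u m 1 0 0 / K m
        have h := (hb2 m ⟨0, hJ m⟩).1
        have h2 := (hb2 m ⟨0, hJ m⟩).2
        have hlm : ((m:ℝ) + 4) ≤ l m := by exact_mod_cast strictMono_ge l hl (hl4 0) m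
        have hm4 : (0:ℝ) < (m:ℝ) + 4 := by positivity
        have hip : (0:ℝ) < ((r m : ℚ):ℝ)⁻¹ * K m :=
          mul_pos (inv_pos.mpr (hrpos m)) (hK0 m)
        have hu0 : (u m 1 0 ⟨0, hJ m⟩ : ℝ) ≤ 0 := by
          by_contra hc
          push_neg at hc
          nlinarith [mul_pos (hlR m) hc]
        have hr2R : ((r m : ℚ):ℝ) < 2 := by exact_mod_cast hr2 m
        have key : (-(u m 1 0 ⟨0, hJ m⟩ : ℝ)) * ((m:ℝ) + 4) ≤ 2 * K m := by
          nlinarith [mul_le_mul_of_nonneg_left hlm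
              (by linarith : (0:ℝ) ≤ -(u m 1 0 ⟨0, hJ m⟩ : ℝ)),
            mul_lt_mul_of_pos_right hr2R (hK0 m)]
        rw [neg_le, ← neg_div, div_le_div_iff₀ (hK0 m) hm4]
        linarith [key]
      · -- u m 1 0 0 / K m ≤ 0
        have h2 := (hb2 m ⟨0, hJ m⟩).2
        have hip : (0:ℝ) < ((r m : ℚ):ℝ)⁻¹ * K m :=
          mul_pos (inv_pos.mpr (hrpos m)) (hK0 m)
        have hu0 : (u m 1 0 ⟨0, hJ m⟩ : ℝ) ≤ 0 := by
          by_contra hc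
          push_neg at hc
          nlinarith [mul_pos (hlR m) hc]
        exact div_nonpos_of_nonpos_of_nonneg hu0 (hK0 m).le
    -- every S g has an ultrafilter limit
    have hSlim : ∀ g : G, ∃ L, Tendsto (S g) 𝒰 (nhds L) := by
      intro g
      -- order-unit bound
      set n := nn g with hn
      set x := xx g with hx
      set N : ℕ := Finset.univ.sup (fun j => (x.1 j).natAbs + (x.2 j).natAbs) with hN
      have hxN : ∀ j, x.1 j ≤ (N:ℤ) ∧ -(N:ℤ) ≤ x.1 j ∧ x.2 j ≤ (N:ℤ) ∧ -(N:ℤ) ≤ x.2 j := by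
        intro j
        have h1 : (x.1 j).natAbs + (x.2 j).natAbs ≤ N :=
          Finset.le_sup (f := fun j => (x.1 j).natAbs + (x.2 j).natAbs) (Finset.mem_univ j)
        omega
      have hunit : ∀ (j : Fin (J n)), (1:ℤ) ≤ u n 0 0 j + u n 1 0 j ∧
          (1:ℤ) ≤ u n 0 1 j + u n 1 1 j := by
        intro j
        constructor
        · have := rat_unit_pos (hKQ n) (hr1 n) (hr2 n) (hlQ n)
            ((hcond4 n j).1.1) ((hcond4 n j).2.2.2.1)
          have h : (0:ℚ) < ((u n 0 0 j + u n 1 0 j : ℤ) : ℚ) := by push_cast; linarith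
          exact_mod_cast h
        · have := rat_unit_pos (hKQ n) (hr1 n) (hr2 n) (hlQ n)
            ((hcond4 n j).2.1.1) ((hcond4 n j).2.2.1.1)
          have h : (0:ℚ) < ((u n 0 1 j + u n 1 1 j : ℤ) : ℚ) := by push_cast; linarith
          exact_mod_cast h
      set pu1 : (Fin (J n) → ℤ) × (Fin (J n) → ℤ) := (u n 0 0, u n 0 1) with hpu1
      set pu2 : (Fin (J n) → ℤ) × (Fin (J n) → ℤ) := (u n 1 0, u n 1 1) with hpu2
      have hw : ∀ ε : ℤ, ε = 1 ∨ ε = -1 → ∀ j,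
          0 ≤ (N • (pu1 + pu2)).1 j + ε * x.1 j ∧ 0 ≤ (N • (pu1 + pu2)).2 j + ε * x.2 j := by
        intro ε hε j
        have h1 := (hunit j).1
        have h2 := (hunit j).2
        have h3 := hxN j
        have e1 : (N • (pu1 + pu2)).1 j = (N:ℤ) * (u n 0 0 j + u n 1 0 j) := by
          simp [hpu1, hpu2, nsmul_eq_mul, mul_add]
        have e2 : (N • (pu1 + pu2)).2 j = (N:ℤ) * (u n 0 1 j + u n 1 1 j) := by
          simp [hpu1, hpu2, nsmul_eq_mul, mul_add]
        rw [e1, e2]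
        have hN1 : (N:ℤ) * 1 ≤ (N:ℤ) * (u n 0 0 j + u n 1 0 j) :=
          mul_le_mul_of_nonneg_left h1 (by positivity)
        have hN2 : (N:ℤ) * 1 ≤ (N:ℤ) * (u n 0 1 j + u n 1 1 j) :=
          mul_le_mul_of_nonneg_left h2 (by positivity)
        rcases hε with rfl | rfl <;> constructor <;> nlinarith
      -- entry bound
      have hEbnd : ∀ m, n ≤ m → |(eEnt J A hJ n x m : ℝ)| ≤
          (N:ℝ) * ((u m 0 0 ⟨0, hJ m⟩ : ℝ) + (u m 1 0 ⟨0, hJ m⟩ : ℝ)) := by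
        intro m hm
        have hE : eEnt J A hJ n (pu1 + pu2) m
            = u m 0 0 ⟨0, hJ m⟩ + u m 1 0 ⟨0, hJ m⟩ := by
          rw [eEnt_add, hu_entry 0 n m hm, hu_entry 1 n m hm]
        have hplus : 0 ≤ eEnt J A hJ n (N • (pu1 + pu2) + x) m :=
          eEnt_nonneg J A hJ hA n _ (fun j => by
            have := hw 1 (Or.inl rfl) j
            simpa using this) m
        have hminus : 0 ≤ eEnt J A hJ n (N • (pu1 + pu2) - x) m :=
          eEnt_nonneg J A hJ hA n _ (fun j => by
            have := hw (-1) (Or.inr rfl) j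
            constructor
            · have h := this.1; simp only [Prod.fst_sub, Pi.sub_apply]; linarith
            · have h := this.2; simp only [Prod.snd_sub, Pi.sub_apply]; linarith) m
        rw [eEnt_add, eEnt_nsmul, hE] at hplus
        rw [eEnt_sub, eEnt_nsmul, hE] at hminus
        rw [abs_le]
        constructor
        · have h' : -((N:ℤ) * (u m 0 0 ⟨0, hJ m⟩ + u m 1 0 ⟨0, hJ m⟩)) ≤ eEnt J A hJ n x m := by
            linarith
          exact_mod_cast h'
        · have h' : eEnt J A hJ n x m ≤ (N:ℤ) * (u m 0 0 ⟨0, hJ m⟩ + u m 1 0 ⟨0, hJ m⟩) := by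
            linarith
          exact_mod_cast h'
      -- sum of u-entries is at most 2 K m
      have hsum2K : ∀ m, (u m 0 0 ⟨0, hJ m⟩ : ℝ) + (u m 1 0 ⟨0, hJ m⟩ : ℝ) ≤ 2 * K m := by
        intro m
        have := rat_unit_le (hKQ m) (hr1 m) (hr2 m) (hlQ m)
          ((hcond4 m ⟨0, hJ m⟩).1.2) ((hcond4 m ⟨0, hJ m⟩).2.2.2.2)
        exact_mod_cast this
      have hub : ∀ᶠ m in (𝒰 : Filter ℕ), S g m ∈ Set.Icc (-(2*(N:ℝ))) (2*(N:ℝ)) := by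
        refine Filter.Eventually.filter_mono h𝒰 ?_
        rw [eventually_atTop]
        refine ⟨n, fun m hm => ?_⟩
        have h1 := hEbnd m hm
        have h2 := hsum2K m
        have h3 : |S g m| ≤ 2*(N:ℝ) := by
          simp only [hS]
          rw [abs_div, abs_of_pos (hK0 m)]
          rw [div_le_iff₀ (hK0 m)]
          have hnn : (0:ℝ) ≤ (N:ℝ) := by positivity
          calc |(eEnt J A hJ n x m : ℝ)|
              ≤ (N:ℝ) * ((u m 0 0 ⟨0, hJ m⟩ : ℝ) + (u m 1 0 ⟨0, hJ m⟩ : ℝ)) := h1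
            _ ≤ (N:ℝ) * (2 * K m) := mul_le_mul_of_nonneg_left h2 hnn
            _ = 2*(N:ℝ) * K m := by ring
        rw [Set.mem_Icc]
        exact abs_le.mp h3
      obtain ⟨L, _, hL⟩ := (isCompact_Icc (a := -(2*(N:ℝ))) (b := 2*(N:ℝ))).ultrafilter_le_nhds
        (𝒰.map (S g)) (Filter.le_principal_iff.mpr (Filter.mem_map.mpr hub))
      rw [Ultrafilter.coe_map] at hL
      exact ⟨L, hL⟩
    choose σf hσf using hSlim
    have huniq : ∀ g L, Tendsto (S g) 𝒰 (nhds L) → σf g = L :=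
      fun g L h => tendsto_nhds_unique (hσf g) h
    -- additivity
    have hadd : ∀ g h' : G, σf (g + h') = σf g + σf h' := by
      intro g h'
      set N := max (nn g) (nn h') with hNdef
      have hga : nn g + (N - nn g) = N := by omega
      have hhb : nn h' + (N - nn h') = N := by omega
      set X := castPair J hga (blockPush J A (N - nn g) (nn g) (xx g)) with hXdef
      set Y := castPair J hhb (blockPush J A (N - nn h') (nn h') (xx h')) with hYdef
      have hXg : η N X = g := by
        rw [hXdef, eta_castPair, ← eta_push J A η hηcompat, hxx]
      have hYh : η N Y = h' := by
        rw [hYdef, eta_castPair, ← eta_push J A η hηcompat, hxx]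
      have hXY : η N (X + Y) = g + h' := by rw [map_add, hXg, hYh]
      have e1 := hcong (g + h') N (X + Y) hXY
      have e2 := hcong g N X hXg
      have e3 := hcong h' N Y hYh
      have heq : ∀ᶠ m in atTop, S (g + h') m = S g m + S h' m := by
        filter_upwards [e1, e2, e3] with m h1 h2 h3
        rw [h1, h2, h3, eEnt_add]
        push_cast
        ring
      have heq2 : S (g + h') =ᶠ[(𝒰 : Filter ℕ)] (fun m => S g m + S h' m) :=
        heq.filter_mono h𝒰
      have : Tendsto (S (g + h')) 𝒰 (nhds (σf g + σf h')) :=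
        ((hσf g).add (hσf h')).congr' heq2.symm
      exact huniq _ _ this
    set σ₁ : G →+ ℝ := AddMonoidHom.mk' σf hadd with hσ₁def
    -- value on U1
    have hvU1 : σf U1 = 1 := by
      apply huniq
      have e1 := hcong U1 0 (u 0 0 0, u 0 0 1) (hU1 0)
      have heq : ∀ᶠ m in atTop, S U1 m = (u m 0 0 ⟨0, hJ m⟩ : ℝ) / K m := by
        have h0 : ∀ᶠ m in atTop, (0:ℕ) ≤ m := Filter.Eventually.of_forall (fun m => Nat.zero_le m)
        filter_upwards [e1, h0] with m h1 h2
        rw [h1, hu_entry 0 0 m h2]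
      have heq' : S U1 =ᶠ[atTop] (fun m => (u m 0 0 ⟨0, hJ m⟩ : ℝ) / K m) := heq
      exact (hlim1.congr' heq'.symm).mono_left h𝒰
    have hvU2 : σf U2 = 0 := by
      apply huniq
      have e1 := hcong U2 0 (u 0 1 0, u 0 1 1) (hU2 0)
      have heq : ∀ᶠ m in atTop, S U2 m = (u m 1 0 ⟨0, hJ m⟩ : ℝ) / K m := by
        have h0 : ∀ᶠ m in atTop, (0:ℕ) ≤ m := Filter.Eventually.of_forall (fun m => Nat.zero_le m)
        filter_upwards [e1, h0] with m h1 h2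
        rw [h1, hu_entry 1 0 m h2]
      have heq' : S U2 =ᶠ[atTop] (fun m => (u m 1 0 ⟨0, hJ m⟩ : ℝ) / K m) := heq
      exact (hlim2.congr' heq'.symm).mono_left h𝒰
    refine ⟨σ₁, ⟨?_, ?_⟩, hvU1, hvU2⟩
    · -- positivity on P
      intro a ha
      rw [hP] at ha
      obtain ⟨n, x, hx, hax⟩ := ha
      have e1 := hcong a n x hax
      have hev : ∀ᶠ m in (𝒰 : Filter ℕ), 0 ≤ S a m := by
        refine Filter.Eventually.filter_mono h𝒰 ?_
        filter_upwards [e1] with m h1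
        rw [h1]
        have := eEnt_nonneg J A hJ hA n x hx m
        positivity
      exact ge_of_tendsto (hσf a) hev
    · show σf (U1 + U2) = 1
      rw [hadd, hvU1, hvU2, add_zero]
/-- The swap of the two coordinates of `Fin 2`. -/
def swF : Fin 2 → Fin 2 := fun i => ⟨1 - i.val, by omega⟩

/-- Coordinate swap on a product, as an additive hom. -/
def swapHom (M : Type*) [AddCommGroup M] : (M × M) →+ (M × M) :=
  AddMonoidHom.mk' (fun x => (x.2, x.1)) (fun _ _ => rfl)

lemma swap_blockStep (J : ℕ → ℕ) (A : ∀ n, Fin 2 → Fin 2 → Fin (J (n+1)) → Fin (J n) → ℤ)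
    (n : ℕ) (x : (Fin (J n) → ℤ) × (Fin (J n) → ℤ)) :
    blockStep J A n (x.2, x.1)
      = ((blockStep J (fun m p q => A m (swF p) (swF q)) n x).2,
         (blockStep J (fun m p q => A m (swF p) (swF q)) n x).1) := by
  have h0 : swF 0 = 1 := rfl
  have h1 : swF 1 = 0 := rfl
  refine Prod.ext (funext fun j' => ?_) (funext fun j' => ?_)
  · show (∑ j, (A n 0 0 j' j * x.2 j + A n 0 1 j' j * x.1 j))
        = ∑ j, (A n (swF 1) (swF 0) j' j * x.1 j + A n (swF 1) (swF 1) j' j * x.2 j)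
    rw [h0, h1]
    exact Finset.sum_congr rfl fun j _ => by ring
  · show (∑ j, (A n 1 0 j' j * x.2 j + A n 1 1 j' j * x.1 j))
        = ∑ j, (A n (swF 0) (swF 0) j' j * x.1 j + A n (swF 0) (swF 1) j' j * x.2 j)
    rw [h0, h1]
    exact Finset.sum_congr rfl fun j _ => by ring

lemma swap_blockPush (J : ℕ → ℕ) (A : ∀ n, Fin 2 → Fin 2 → Fin (J (n+1)) → Fin (J n) → ℤ)
    (k n : ℕ) (x : (Fin (J n) → ℤ) × (Fin (J n) → ℤ)) :
    blockPush J A k n (x.2, x.1)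
      = ((blockPush J (fun m p q => A m (swF p) (swF q)) k n x).2,
         (blockPush J (fun m p q => A m (swF p) (swF q)) k n x).1) := by
  induction k with
  | zero => rfl
  | succ k ih =>
      show blockStep J A (n+k) (blockPush J A k n (x.2, x.1)) = _
      rw [ih]
      exact swap_blockStep J A (n+k) _
/-- Lemma 2.1: every state of the inductive limit `(G, G⁺)` of Theorem 1.3
is nonnegative on `u¹` and `u²`, and there are states `σ₁, σ₂` with
`σ₁(u¹) = σ₂(u²) = 1` and `σ₁(u²) = σ₂(u¹) = 0`. -/
theorem stmt9
    (J : ℕ → ℕ) (hJ : ∀ n, 0 < J n)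
    (u : ∀ n, Fin 2 → Fin 2 → Fin (J n) → ℤ)
    (A : ∀ n, Fin 2 → Fin 2 → Fin (J (n+1)) → Fin (J n) → ℤ)
    (hA : ∀ n (p q : Fin 2) j' j, 0 < A n p q j' j)
    (hcompat : ∀ n (i p : Fin 2) (j' : Fin (J (n+1))),
      u (n+1) i p j' = ∑ j, (A n p 0 j' j * u n i 0 j + A n p 1 j' j * u n i 1 j))
    (r : ℕ → ℚ) (hr1 : ∀ n, 1 < r n) (hr2 : ∀ n, r n < 2)
    (hrmono : ∀ n, r (n+1) ≤ r n)
    (hrlim : Filter.Tendsto r Filter.atTop (nhds 1))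
    (K l : ℕ → ℕ) (hK : StrictMono K) (hl : StrictMono l)
    (hK4 : ∀ n, 4 ≤ K n) (hl4 : ∀ n, 4 ≤ l n)
    (hcond4 : ∀ n (j : Fin (J n)),
      ((r n)⁻¹ * K n ≤ (u n 0 0 j : ℚ) ∧ (u n 0 0 j : ℚ) ≤ r n * K n) ∧
      ((r n)⁻¹ * K n ≤ (u n 1 1 j : ℚ) ∧ (u n 1 1 j : ℚ) ≤ r n * K n) ∧
      (-(r n * K n) ≤ (l n : ℚ) * u n 0 1 j ∧ (l n : ℚ) * u n 0 1 j ≤ -((r n)⁻¹ * K n)) ∧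
      (-(r n * K n) ≤ (l n : ℚ) * u n 1 0 j ∧ (l n : ℚ) * u n 1 0 j ≤ -((r n)⁻¹ * K n)))
    (hcond5 : ∀ n (j' j'' : Fin (J (n+1))) (j : Fin (J n)),
      ((r n)⁻¹ * A n 0 0 j' j ≤ (l n : ℚ) * A n 1 0 j'' j ∧
        (l n : ℚ) * A n 1 0 j'' j ≤ r n * A n 0 0 j' j) ∧
      ((r n)⁻¹ * A n 1 1 j' j ≤ (l n : ℚ) * A n 0 1 j'' j ∧
        (l n : ℚ) * A n 0 1 j'' j ≤ r n * A n 1 1 j' j))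
    {G : Type*} [AddCommGroup G]
    (η : ∀ n, ((Fin (J n) → ℤ) × (Fin (J n) → ℤ)) →+ G)
    (hηcompat : ∀ n x, η n x = η (n+1) (blockStep J A n x))
    (hsurj : ∀ g : G, ∃ n x, η n x = g)
    (hker : ∀ n x, η n x = 0 → ∃ k, blockPush J A k n x = 0)
    (P : Set G)
    (hP : P = {g : G | ∃ n x, (∀ j, 0 ≤ x.1 j ∧ 0 ≤ x.2 j) ∧ η n x = g})
    (U1 U2 : G)
    (hU1 : ∀ n, η n (u n 0 0, u n 0 1) = U1)
    (hU2 : ∀ n, η n (u n 1 0, u n 1 1) = U2)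
    :
    (∀ σ : G →+ ℝ, IsState P (U1 + U2) σ → 0 ≤ σ U1 ∧ 0 ≤ σ U2) ∧
    ∃ σ₁ σ₂ : G →+ ℝ, IsState P (U1 + U2) σ₁ ∧ IsState P (U1 + U2) σ₂ ∧
      σ₁ U1 = 1 ∧ σ₂ U2 = 1 ∧ σ₁ U2 = 0 ∧ σ₂ U1 = 0 := by

  have main1 := aux_main J hJ u A hA hcompat r hr1 hr2 hrlim K l hl hK4 hl4 hcond4
    η hηcompat hsurj hker P hP U1 U2 hU1 hU2
  -- the swapped system
  have hsw0 : swF 0 = 1 := rfl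
  have hsw1 : swF 1 = 0 := rfl
  have hA' : ∀ n (p q : Fin 2) j' j, 0 < A n (swF p) (swF q) j' j :=
    fun n p q j' j => hA n _ _ j' j
  have hcompat' : ∀ n (i p : Fin 2) (j' : Fin (J (n+1))),
      u (n+1) (swF i) (swF p) j' = ∑ j, (A n (swF p) (swF 0) j' j * u n (swF i) (swF 0) j
        + A n (swF p) (swF 1) j' j * u n (swF i) (swF 1) j) := by
    intro n i p j'
    rw [hsw0, hsw1, hcompat n (swF i) (swF p) j']
    exact Finset.sum_congr rfl fun j _ => by ring
  have hcond4' : ∀ n (j : Fin (J n)),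
      ((r n)⁻¹ * K n ≤ (u n (swF 0) (swF 0) j : ℚ) ∧ (u n (swF 0) (swF 0) j : ℚ) ≤ r n * K n) ∧
      ((r n)⁻¹ * K n ≤ (u n (swF 1) (swF 1) j : ℚ) ∧ (u n (swF 1) (swF 1) j : ℚ) ≤ r n * K n) ∧
      (-(r n * K n) ≤ (l n : ℚ) * u n (swF 0) (swF 1) j ∧
        (l n : ℚ) * u n (swF 0) (swF 1) j ≤ -((r n)⁻¹ * K n)) ∧
      (-(r n * K n) ≤ (l n : ℚ) * u n (swF 1) (swF 0) j ∧
        (l n : ℚ) * u n (swF 1) (swF 0) j ≤ -((r n)⁻¹ * K n)) := by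
    intro n j
    rw [hsw0, hsw1]
    exact ⟨(hcond4 n j).2.1, (hcond4 n j).1, (hcond4 n j).2.2.2, (hcond4 n j).2.2.1⟩
  have hηcompat' : ∀ n (x : (Fin (J n) → ℤ) × (Fin (J n) → ℤ)),
      η n (x.2, x.1) = η (n+1)
        ((blockStep J (fun m p q => A m (swF p) (swF q)) n x).2,
         (blockStep J (fun m p q => A m (swF p) (swF q)) n x).1) := by
    intro n x
    rw [hηcompat n (x.2, x.1), swap_blockStep]
  have hsurj' : ∀ g : G, ∃ n : ℕ, ∃ x : (Fin (J n) → ℤ) × (Fin (J n) → ℤ), η n (x.2, x.1) = g := by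
    intro g
    obtain ⟨n, x, h⟩ := hsurj g
    exact ⟨n, (x.2, x.1), h⟩
  have hker' : ∀ n (x : (Fin (J n) → ℤ) × (Fin (J n) → ℤ)), η n (x.2, x.1) = 0 →
      ∃ k, blockPush J (fun m p q => A m (swF p) (swF q)) k n x = 0 := by
    intro n x h
    obtain ⟨k, hk⟩ := hker n (x.2, x.1) h
    rw [swap_blockPush] at hk
    refine ⟨k, Prod.ext ?_ ?_⟩
    · exact congrArg Prod.snd hk
    · exact congrArg Prod.fst hk
  have hP' : P = {g : G | ∃ n : ℕ, ∃ x : (Fin (J n) → ℤ) × (Fin (J n) → ℤ),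
      (∀ j, 0 ≤ x.1 j ∧ 0 ≤ x.2 j) ∧ η n (x.2, x.1) = g} := by
    rw [hP]
    ext g
    simp only [Set.mem_setOf_eq]
    constructor
    · rintro ⟨n, x, hx, h⟩
      exact ⟨n, (x.2, x.1), fun j => ⟨(hx j).2, (hx j).1⟩, h⟩
    · rintro ⟨n, x, hx, h⟩
      exact ⟨n, (x.2, x.1), fun j => ⟨(hx j).2, (hx j).1⟩, h⟩
  have hU1' : ∀ n, η n (u n 1 0, u n 1 1) = U2 := hU2
  have hU2' : ∀ n, η n (u n 0 0, u n 0 1) = U1 := hU1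
  have main2 := aux_main J hJ (fun n i p => u n (swF i) (swF p))
    (fun n p q => A n (swF p) (swF q)) hA' hcompat' r hr1 hr2 hrlim K l hl hK4 hl4 hcond4'
    (fun n => (η n).comp (swapHom _)) hηcompat' hsurj' hker' P hP' U2 U1 hU1' hU2'
  rw [add_comm U2 U1] at main2
  refine ⟨fun σ hσ => ⟨main1.1 σ hσ, main2.1 σ hσ⟩, ?_⟩
  obtain ⟨σ₁, h1, h11, h12⟩ := main1.2
  obtain ⟨σ₂, h2, h22, h21⟩ := main2.2
  exact ⟨σ₁, σ₂, h1, h2, h11, h22, h12, h21⟩
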